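/- For all integers n ≥ m ≥ 1, the following identity holds in the polynomial ring ℝ[x,y]: (∂_x − ∂_y)( x^n y^m + y^n x^m ) = (x − y) · [ (n−m) Σ_{k=1}^{n−m−1} x^{n−1−k} y^{m−1+k} − m x^{n−1} y^{m−1} − m y^{n−1} x^{m−1} ], where the sum Σ_{k=1}^{n−m−1} is empty (equal to 0) when n ≤ m + 1. -/
import Mathlib
open MvPolynomial

lemma tele (d : ℕ) : (X 0 - X 1 : MvPolynomial (Fin 2) ℝ) *
    ∑ k ∈ Finset.Icc 1 d, X 0 ^ (d + 1 - k) * X 1 ^ k =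
    X 0 ^ (d + 1) * X 1 - X 0 * X 1 ^ (d + 1) := by
  induction d with
  | zero => simp
  | succ d ih =>
    rw [Finset.sum_Icc_succ_top (by omega)]
    have h2 : ∑ k ∈ Finset.Icc 1 d, (X 0 : MvPolynomial (Fin 2) ℝ) ^ (d + 1 + 1 - k) * X 1 ^ k
        = X 0 * ∑ k ∈ Finset.Icc 1 d, X 0 ^ (d + 1 - k) * X 1 ^ k := by
      rw [Finset.mul_sum]
      refine Finset.sum_congr rfl fun k hk => ?_
      have : d + 1 + 1 - k = (d + 1 - k) + 1 := by
        simp only [Finset.mem_Icc] at hk; omega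
      rw [this, pow_succ]; ring
    rw [h2, show d+1+1-(d+1) = 1 by omega]
    linear_combination (X 0 : MvPolynomial (Fin 2) ℝ) * ih

theorem stmt_11 (n m : ℕ) (hm : 1 ≤ m) (hnm : m ≤ n) :
    pderiv 0 ((X 0 : MvPolynomial (Fin 2) ℝ) ^ n * X 1 ^ m + X 1 ^ n * X 0 ^ m) -
      pderiv 1 ((X 0 : MvPolynomial (Fin 2) ℝ) ^ n * X 1 ^ m + X 1 ^ n * X 0 ^ m) =
    (X 0 - X 1) *
      (C ((n : ℝ) - (m : ℝ)) *
          (∑ k ∈ Finset.Icc 1 (n - m - 1), X 0 ^ (n - 1 - k) * X 1 ^ (m - 1 + k))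
        - C (m : ℝ) * (X 0 ^ (n - 1) * X 1 ^ (m - 1))
        - C (m : ℝ) * (X 1 ^ (n - 1) * X 0 ^ (m - 1))) := by
  obtain ⟨m', rfl⟩ : ∃ m', m = m' + 1 := ⟨m - 1, by omega⟩
  obtain ⟨d, rfl⟩ : ∃ d, n = m' + 1 + d := ⟨n - (m' + 1), by omega⟩
  simp only [map_add, pderiv_mul, pderiv_pow, pderiv_X_self,
    pderiv_X_of_ne (show (1:Fin 2) ≠ 0 by decide),
    pderiv_X_of_ne (show (0:Fin 2) ≠ 1 by decide)]
  simp only [show m' + 1 + d - 1 = m' + d by omega, show m' + 1 - 1 = m' by omega,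
    show m' + 1 + d - (m' + 1) - 1 = d - 1 by omega]
  cases d with
  | zero =>
    rw [show (0:ℕ) - 1 = 0 from rfl, Finset.Icc_eq_empty (by omega), Finset.sum_empty]
    simp only [map_sub, map_natCast]
    push_cast
    ring
  | succ e =>
    have hsum : ∑ k ∈ Finset.Icc 1 (e + 1 - 1), (X 0 : MvPolynomial (Fin 2) ℝ) ^ (m' + (e+1) - k) * X 1 ^ (m' + k)
        = X 0 ^ m' * X 1 ^ m' * ∑ k ∈ Finset.Icc 1 e, X 0 ^ (e + 1 - k) * X 1 ^ k := by
      rw [show e + 1 - 1 = e by omega, Finset.mul_sum]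
      refine Finset.sum_congr rfl fun k hk => ?_
      simp only [Finset.mem_Icc] at hk
      rw [show m' + (e+1) - k = m' + (e + 1 - k) by omega, pow_add]; ring
    rw [hsum]
    have ht := tele e
    simp only [map_sub, map_natCast]
    push_cast
    linear_combination (-(e : MvPolynomial (Fin 2) ℝ) - 1) * X 0 ^ m' * X 1 ^ m' * ht
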